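/- Let R be a Dedekind domain and S an overring of R. Then the induced pushforward map ι₊ : Pic(R) → Pic(S) on ideal class groups, sending the class of a fractional ideal I to the class of IS, is a surjective group homomorphism. -/

import Mathlib

open scoped nonZeroDivisors

open FractionalIdeal Submodule

section Aux

variable {R : Type*} [CommRing R] [IsDomain R] [IsDedekindDomain R]
  {K : Type*} [Field K] [Algebra R K] [IsFractionRing R K]
  (S : Subalgebra R K)

theorem aux_algebraMap_mem_nzd {r : R} (hr : r ∈ R⁰) :
    algebraMap R S r ∈ (↥S)⁰ := by
  rw [mem_nonZeroDivisors_iff_ne_zero] at hr ⊢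
  intro h
  apply hr
  have : algebraMap S K (algebraMap R S r) = 0 := by rw [h, _root_.map_zero]
  rw [← IsScalarTower.algebraMap_apply R S K] at this
  exact IsFractionRing.injective R K (by simpa using this)

theorem aux_isFractionRing : IsFractionRing S K where
  map_units := by
    rintro ⟨s, hs⟩
    rw [mem_nonZeroDivisors_iff_ne_zero] at hs
    refine isUnit_iff_ne_zero.mpr ?_
    simpa using fun h => hs (Subtype.ext (by simpa using h))
  surj := by
    intro z
    obtain ⟨⟨a, b⟩, h⟩ := IsLocalization.surj R⁰ z
    refine ⟨⟨algebraMap R S a, ⟨algebraMap R S (b : R), aux_algebraMap_mem_nzd S b.2⟩⟩, ?_⟩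
    simpa [← IsScalarTower.algebraMap_apply R S K] using h
  exists_of_eq := by
    intro x y h
    have : Function.Injective (algebraMap S K) := Subtype.val_injective
    exact ⟨1, by rw [this h]⟩

end Aux

set_option maxHeartbeats 1000000 in
/-- Let `R` be a Dedekind domain with fraction field `K` and `S` an overring of `R`
(which is again a Dedekind domain).  The pushforward map `Pic(R) → Pic(S)`, sending the
class of a nonzero ideal `I` of `R` to the class of `IS`, is a (well-defined) surjective
group homomorphism. -/
theorem classGroup_pushforward_surjective (R : Type*) [CommRing R] [IsDomain R]
    [IsDedekindDomain R] (K : Type*) [Field K] [Algebra R K] [IsFractionRing R K]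
    (S : Subalgebra R K) [IsDedekindDomain S] :
    ∃ f : ClassGroup R →* ClassGroup S,
      Function.Surjective f ∧
      ∀ (I : Ideal R) (hI : I ∈ (Ideal R)⁰)
        (hJ : I.map (algebraMap R S) ∈ (Ideal S)⁰),
        f (ClassGroup.mk0 ⟨I, hI⟩) = ClassGroup.mk0 ⟨I.map (algebraMap R S), hJ⟩ := by
  haveI : IsFractionRing S K := aux_isFractionRing S
  have hf : R⁰ ≤ Submonoid.comap (algebraMap R S) (↥S)⁰ :=
    fun r hr => aux_algebraMap_mem_nzd S hr
  -- the localization map `K → K` is the identity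
  have map_id : IsLocalization.map (S := K) K (algebraMap R S) hf = RingHom.id K := by
    apply IsLocalization.ringHom_ext R⁰
    ext r
    simp [IsLocalization.map_eq, ← IsScalarTower.algebraMap_apply R S K]
  -- the extension monoid hom on fractional ideals
  let E : FractionalIdeal R⁰ K →* FractionalIdeal (↥S)⁰ K :=
    { toFun := extended K hf
      map_one' := extended_one K hf
      map_mul' := fun I J => extended_mul K hf I J }
  have coeE : ∀ I : FractionalIdeal R⁰ K,
      (E I : Submodule S K) = span S ((I : Submodule R K) : Set K) := by
    intro I
    rw [show (E I : Submodule S K) = (extended K hf I : Submodule S K) from rfl,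
      coe_extended_eq_span, map_id]
    simp
    rfl
  let h : (FractionalIdeal R⁰ K)ˣ →* ClassGroup S :=
    (ClassGroup.mk K).comp (Units.map E)
  have hker : ∀ u ∈ (toPrincipalIdeal R K).range, h u = 1 := by
    intro u hu
    obtain ⟨x, hx⟩ := mem_principal_ideals_iff.mp hu
    refine ClassGroup.mk_eq_one_iff.mpr ?_
    have : ((Units.map E u : (FractionalIdeal (↥S)⁰ K)ˣ) : FractionalIdeal (↥S)⁰ K)
        = E (u : FractionalIdeal R⁰ K) := rfl
    rw [this]
    refine ⟨⟨x, ?_⟩⟩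
    rw [coeE, ← hx, coe_spanSingleton, span_span_of_tower]
  let f : ClassGroup R →* ClassGroup S :=
    (QuotientGroup.lift _ h hker).comp (ClassGroup.equiv K (R := R)).toMonoidHom
  have hfmk : ∀ u : (FractionalIdeal R⁰ K)ˣ,
      f (ClassGroup.mk K u) = ClassGroup.mk K (Units.map E u) := by
    intro u
    show QuotientGroup.lift _ h hker (ClassGroup.equiv K (ClassGroup.mk K u)) = _
    rw [ClassGroup.equiv_mk]
    have : (Units.mapEquiv (↑(FractionalIdeal.canonicalEquiv R⁰ K K)) u) = u := by
      ext
      simp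
    rw [this]
    rfl
  refine ⟨f, ?_, ?_⟩
  · -- surjectivity
    intro c
    obtain ⟨J, rfl⟩ := ClassGroup.mk0_surjective c
    rw [← ClassGroup.mk_mk0 K J]
    set u : (FractionalIdeal (↥S)⁰ K)ˣ := FractionalIdeal.mk0 K J
    obtain ⟨s, hs⟩ := FractionalIdeal.fg_unit u
    have hIfrac : IsFractional R⁰ (span R (s : Set K)) :=
      isFractional_of_fg ⟨s, rfl⟩
    set I : FractionalIdeal R⁰ K := ⟨span R (s : Set K), hIfrac⟩
    have hEI : E I = (u : FractionalIdeal (↥S)⁰ K) := by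
      apply coeToSubmodule_injective
      show (E I : Submodule S K) = ((u : FractionalIdeal (↥S)⁰ K) : Submodule S K)
      rw [coeE]
      show span S ((span R (s : Set K) : Submodule R K) : Set K) = _
      rw [span_span_of_tower, hs]
    have hIne : I ≠ 0 := by
      intro h0
      apply Units.ne_zero u
      rw [← hEI, h0]
      exact extended_zero K hf
    refine ⟨ClassGroup.equiv K |>.symm (QuotientGroup.mk (Units.mk0 I hIne)), ?_⟩
    have : (ClassGroup.equiv K |>.symm (QuotientGroup.mk (Units.mk0 I hIne)))
        = ClassGroup.mk K (Units.mk0 I hIne) := by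
      apply (ClassGroup.equiv K).injective
      rw [MulEquiv.apply_symm_apply, ClassGroup.equiv_mk]
      congr 1
      ext
      simp
    rw [this, hfmk]
    congr 1
    exact Units.ext hEI
  · -- compatibility on ideals
    intro I hI hJ
    rw [← ClassGroup.mk_mk0 K ⟨I, hI⟩, hfmk, ← ClassGroup.mk_mk0 K ⟨I.map (algebraMap R S), hJ⟩]
    congr 1
    ext : 1
    show E ((I : Ideal R) : FractionalIdeal R⁰ K)
        = ((I.map (algebraMap R S) : Ideal S) : FractionalIdeal (↥S)⁰ K)
    apply coeToSubmodule_injective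
    show (E ((I : Ideal R) : FractionalIdeal R⁰ K) : Submodule S K)
        = (((I.map (algebraMap R S) : Ideal S) : FractionalIdeal (↥S)⁰ K) : Submodule S K)
    rw [coeE, coe_coeIdeal, coe_coeIdeal]
    have h1 : ((IsLocalization.coeSubmodule K I : Submodule R K) : Set K)
        = algebraMap R K '' (I : Set R) := rfl
    rw [h1]
    have h2 : Ideal.map (algebraMap R S) I = Ideal.span (algebraMap R S '' (I : Set R)) := rfl
    rw [h2, IsLocalization.coeSubmodule_span, Set.image_image]
    have h3 : (fun x => (algebraMap (↥S) K) ((algebraMap R ↥S) x)) '' (I : Set R)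
        = ⇑(algebraMap R K) '' (I : Set R) := by
      ext x
      simp [← IsScalarTower.algebraMap_apply R S K]
    rw [h3]
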